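/- Let p be a prime not dividing the order of the Weyl group W of Φ. Then p is not a torsion prime for Φ: for every subset Ψ ⊆ Φ that is closed in Φ (i.e., (ℤ-span of Ψ) ∩ Φ = Ψ), setting Ψ̌ = {α̌ : α ∈ Ψ}, the quotient (ℤ-span of Φ̌)/(ℤ-span of Ψ̌) has no p-torsion; concretely, if v lies in the ℤ-span of Φ̌ and p·v lies in the ℤ-span of Ψ̌, then v lies in the ℤ-span of Ψ̌. -/

import Mathlib

/-- Let `Φ` be a finite, reduced, crystallographic root system with Weyl group
`W = ⟨s α : α ∈ Φ⟩`, and let `p` be a prime not dividing `|W|`.  Then `p` is not a torsion prime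
for `Φ`: for every subset `Ψ ⊆ Φ` that is closed in `Φ` (i.e. `ℤΨ ∩ Φ = Ψ`), with
`Ψ̌ = coroot '' Ψ`, the quotient `ℤΦ̌ / ℤΨ̌` has no `p`-torsion; concretely, if `v ∈ ℤΦ̌` and
`p • v ∈ ℤΨ̌`, then `v ∈ ℤΨ̌`. -/
theorem not_torsion_prime_of_not_dvd_weyl_order
    {V V' : Type*} [AddCommGroup V] [Module ℚ V] [AddCommGroup V'] [Module ℚ V']
    [FiniteDimensional ℚ V] [FiniteDimensional ℚ V']
    (P : V →ₗ[ℚ] V' →ₗ[ℚ] ℚ) [P.IsPerfPair]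
    (Φ : Set V) (hfin : Φ.Finite) (coroot : V → V')
    (h2 : ∀ α ∈ Φ, P α (coroot α) = 2)
    (hcrys : ∀ α ∈ Φ, ∀ β ∈ Φ, ∃ n : ℤ, P β (coroot α) = (n : ℚ))
    (hred : ∀ α ∈ Φ, ∀ c : ℚ, c • α ∈ Φ → c = 1 ∨ c = -1)
    (s : V → (V ≃ₗ[ℚ] V))
    (hs_def : ∀ α ∈ Φ, ∀ v : V, s α v = v - (P v (coroot α)) • α)
    (hs_perm : ∀ α ∈ Φ, ∀ β ∈ Φ, s α β ∈ Φ)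
    (p : ℕ) (hp : p.Prime)
    (hpW : ¬ p ∣ Nat.card ↥(Subgroup.closure (s '' Φ)))
    (Ψ : Set V) (hΨ : Ψ ⊆ Φ)
    (hclosed : (Submodule.span ℤ Ψ : Set V) ∩ Φ = Ψ) :
    ∀ v ∈ Submodule.span ℤ (coroot '' Φ),
      (p : ℤ) • v ∈ Submodule.span ℤ (coroot '' Ψ) → v ∈ Submodule.span ℤ (coroot '' Ψ) := by
  classical
  intro v hvL hpvN
  set L : Submodule ℤ V' := Submodule.span ℤ (coroot '' Φ) with hLdef
  set N : Submodule ℤ V' := Submodule.span ℤ (coroot '' Ψ) with hNdef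
  have hNL : N ≤ L := Submodule.span_mono (Set.image_mono hΨ)
  -- injectivity of the pairing in the right argument
  have hinj : ∀ u₁ u₂ : V', (∀ x : V, P x u₁ = P x u₂) → u₁ = u₂ := by
    intro u₁ u₂ h
    exact P.flip.toPerfPair.injective (LinearMap.ext h)
  -- the contragredient action on V'
  set φ : (V ≃ₗ[ℚ] V) → (V' ≃ₗ[ℚ] V') :=
    fun g => (P.flip.toPerfPair.trans g.symm.dualMap).trans P.flip.toPerfPair.symm with hφdef
  have hpair : ∀ (g : V ≃ₗ[ℚ] V) (u : V') (x : V),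
      P x (φ g u) = P (g.symm x) u := by
    intro g u x
    have h1 := P.apply_toPerfPair_flip (g.symm.dualMap (P.flip.toPerfPair u)) x
    have h2' : P x (φ g u) = (g.symm.dualMap (P.flip.toPerfPair u)) x := h1
    rw [h2']
    simp [LinearEquiv.dualMap_apply]
  have hφ_mul : ∀ (g h : V ≃ₗ[ℚ] V) (u : V'), φ (g * h) u = φ g (φ h u) := by
    intro g h u
    apply hinj
    intro x
    rw [hpair, hpair, hpair]
    rfl
  have hφ_one : ∀ u : V', φ 1 u = u := by
    intro u
    apply hinj
    intro x
    rw [hpair]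
    rfl
  -- involutivity of reflections
  have hs_invol : ∀ α ∈ Φ, ∀ x : V, s α (s α x) = x := by
    intro α hα x
    rw [hs_def α hα x, hs_def α hα]
    simp only [map_sub, map_smul, LinearMap.sub_apply, LinearMap.smul_apply, smul_eq_mul,
      h2 α hα]
    module
  have hs_symm : ∀ α ∈ Φ, ∀ x : V, (s α).symm x = s α x := by
    intro α hα x
    rw [LinearEquiv.symm_apply_eq]
    exact (hs_invol α hα x).symm
  have hs_inv : ∀ α ∈ Φ, (s α)⁻¹ = s α := by
    intro α hα
    apply inv_eq_of_mul_eq_one_right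
    apply LinearEquiv.ext
    intro x
    exact hs_invol α hα x
  -- formula for the contragredient of a reflection
  have hφ_s : ∀ α ∈ Φ, ∀ u : V', φ (s α) u = u - (P α u) • coroot α := by
    intro α hα u
    apply hinj
    intro x
    rw [hpair, hs_symm α hα, hs_def α hα]
    simp only [map_sub, map_smul, LinearMap.sub_apply, LinearMap.smul_apply, smul_eq_mul]
    ring
  -- integrality of pairings with elements of L
  have hint : ∀ α ∈ Φ, ∀ u ∈ L, ∃ k : ℤ, P α u = (k : ℚ) := by
    intro α hα u hu
    induction hu using Submodule.span_induction with
    | mem y hy =>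
      obtain ⟨γ, hγ, rfl⟩ := hy
      exact hcrys γ hγ α hα
    | zero => exact ⟨0, by simp⟩
    | add y z _ _ hy hz =>
      obtain ⟨k₁, hk₁⟩ := hy
      obtain ⟨k₂, hk₂⟩ := hz
      refine ⟨k₁ + k₂, ?_⟩
      rw [map_add, hk₁, hk₂]
      push_cast
      ring
    | smul c y _ hy =>
      obtain ⟨k, hk⟩ := hy
      refine ⟨c * k, ?_⟩
      rw [map_zsmul, hk, zsmul_eq_mul]
      push_cast
      ring
  -- the relevant groups
  set G : Subgroup (V ≃ₗ[ℚ] V) := Subgroup.closure (s '' Φ) with hGdef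
  set H : Subgroup (V ≃ₗ[ℚ] V) := Subgroup.closure (s '' Ψ) with hHdef
  have hHG : H ≤ G := Subgroup.closure_mono (Set.image_mono hΨ)
  have hGfin : Finite G := by
    by_contra h
    have : Infinite G := not_finite_iff_infinite.mp h
    rw [Nat.card_eq_zero_of_infinite] at hpW
    exact hpW (dvd_zero p)
  have hHfin : Finite H := Finite.of_injective _ (Subgroup.inclusion_injective hHG)
  have : Fintype H := Fintype.ofFinite H
  have hcardH : ¬ p ∣ Nat.card H := fun hd => hpW (hd.trans (Subgroup.card_dvd_of_le hHG))
  -- key stability properties, by induction on the closure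
  set D : (V ≃ₗ[ℚ] V) → Prop :=
    fun g => (∀ u ∈ L, φ g u ∈ L ∧ u - φ g u ∈ N) ∧ (∀ u ∈ N, φ g u ∈ N) with hDdef
  have hD_s : ∀ α ∈ Ψ, D (s α) := by
    intro α hα
    constructor
    · intro u hu
      obtain ⟨k, hk⟩ := hint α (hΨ hα) u hu
      rw [hφ_s α (hΨ hα), hk, Int.cast_smul_eq_zsmul]
      have hαN : coroot α ∈ N := Submodule.subset_span ⟨α, hα, rfl⟩
      refine ⟨Submodule.sub_mem _ hu (Submodule.smul_mem _ k (hNL hαN)), ?_⟩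
      rw [sub_sub_cancel]
      exact Submodule.smul_mem _ k hαN
    · intro u hu
      obtain ⟨k, hk⟩ := hint α (hΨ hα) u (hNL hu)
      rw [hφ_s α (hΨ hα), hk, Int.cast_smul_eq_zsmul]
      exact Submodule.sub_mem _ hu
        (Submodule.smul_mem _ k (Submodule.subset_span ⟨α, hα, rfl⟩))
  have hD_mul : ∀ g h, D g → D h → D (g * h) := by
    intro g h hg hh
    constructor
    · intro u hu
      rw [hφ_mul]
      obtain ⟨hh1, hh2⟩ := hh.1 u hu
      obtain ⟨hg1, hg2⟩ := hg.1 (φ h u) hh1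
      refine ⟨hg1, ?_⟩
      have : u - φ g (φ h u) = (u - φ h u) + (φ h u - φ g (φ h u)) := by abel
      rw [this]
      exact Submodule.add_mem _ hh2 hg2
    · intro u hu
      rw [hφ_mul]
      exact hg.2 _ (hh.2 u hu)
  have hD_one : D 1 := by
    constructor
    · intro u hu
      rw [hφ_one]
      exact ⟨hu, by simp [Submodule.zero_mem]⟩
    · intro u hu
      rw [hφ_one]
      exact hu
  have hkey : ∀ w ∈ H, D w ∧ D w⁻¹ := by
    intro w hw
    refine Subgroup.closure_induction ?_ ?_ ?_ ?_ hw
    · rintro x ⟨α, hα, rfl⟩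
      rw [hs_inv α (hΨ hα)]
      exact ⟨hD_s α hα, hD_s α hα⟩
    · rw [inv_one]
      exact ⟨hD_one, hD_one⟩
    · rintro x y hx hy ⟨hx1, hx2⟩ ⟨hy1, hy2⟩
      rw [mul_inv_rev]
      exact ⟨hD_mul _ _ hx1 hy1, hD_mul _ _ hy2 hx2⟩
    · rintro x hx ⟨hx1, hx2⟩
      rw [inv_inv]
      exact ⟨hx2, hx1⟩
  -- an H-invariant positive definite bilinear form on V'
  set b := Module.finBasis ℚ V' with hbdef
  set B0 : V' → V' → ℚ := fun x y => ∑ i, b.repr x i * b.repr y i with hB0def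
  set B : V' → V' → ℚ := fun x y => ∑ w : H, B0 (φ (w : V ≃ₗ[ℚ] V) x) (φ (w : V ≃ₗ[ℚ] V) y)
    with hBdef
  have hB0_add : ∀ x y z : V', B0 x (y + z) = B0 x y + B0 x z := by
    intro x y z
    simp only [hB0def, map_add, Finsupp.add_apply, mul_add]
    rw [Finset.sum_add_distrib]
  have hB0_smul : ∀ (c : ℚ) (x y : V'), B0 x (c • y) = c * B0 x y := by
    intro c x y
    simp only [hB0def, map_smul, Finsupp.smul_apply, smul_eq_mul, Finset.mul_sum]
    exact Finset.sum_congr rfl fun i _ => by ring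
  have hB_add : ∀ x y z : V', B x (y + z) = B x y + B x z := by
    intro x y z
    simp only [hBdef, map_add, hB0_add]
    rw [Finset.sum_add_distrib]
  have hB_smul : ∀ (c : ℚ) (x y : V'), B x (c • y) = c * B x y := by
    intro c x y
    simp only [hBdef, map_smul, hB0_smul, Finset.mul_sum]
  have hB_zero : ∀ x : V', B x 0 = 0 := by
    intro x
    have := hB_smul 0 x 0
    simpa using this
  have hB_neg : ∀ x y : V', B x (-y) = -B x y := by
    intro x y
    have := hB_smul (-1) x y
    simpa using this
  -- invariance of B under φ of elements of H
  have hB_inv : ∀ h ∈ H, ∀ x y : V', B (φ h x) (φ h y) = B x y := by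
    intro h hh x y
    have step1 : B (φ h x) (φ h y)
        = ∑ w : H, B0 (φ ((w : V ≃ₗ[ℚ] V) * h) x) (φ ((w : V ≃ₗ[ℚ] V) * h) y) := by
      refine Finset.sum_congr rfl fun w _ => ?_
      rw [hφ_mul, hφ_mul]
    rw [step1]
    exact Fintype.sum_equiv (Equiv.mulRight (⟨h, hh⟩ : H))
      (fun w => B0 (φ ((w : V ≃ₗ[ℚ] V) * h) x) (φ ((w : V ≃ₗ[ℚ] V) * h) y))
      (fun w => B0 (φ (w : V ≃ₗ[ℚ] V) x) (φ (w : V ≃ₗ[ℚ] V) y))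
      (fun w => rfl)
  -- positive definiteness of B
  have hB_def : ∀ x : V', B x x = 0 → x = 0 := by
    intro x hx
    have hnonneg : ∀ w : H, 0 ≤ B0 (φ (w : V ≃ₗ[ℚ] V) x) (φ (w : V ≃ₗ[ℚ] V) x) :=
      fun w => Finset.sum_nonneg fun i _ => mul_self_nonneg _
    have h1 : B0 (φ ((1 : H) : V ≃ₗ[ℚ] V) x) (φ ((1 : H) : V ≃ₗ[ℚ] V) x) = 0 :=
      (Finset.sum_eq_zero_iff_of_nonneg (fun w _ => hnonneg w)).mp hx (1 : H)
        (Finset.mem_univ _)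
    have h2' : B0 x x = 0 := by
      have : ((1 : H) : V ≃ₗ[ℚ] V) = 1 := rfl
      rwa [this, hφ_one] at h1
    have hrepr : ∀ i, b.repr x i = 0 := by
      intro i
      have := (Finset.sum_eq_zero_iff_of_nonneg
        (fun i (_ : i ∈ Finset.univ) => mul_self_nonneg (b.repr x i))).mp h2' i
        (Finset.mem_univ i)
      exact mul_self_eq_zero.mp this
    have : b.repr x = 0 := Finsupp.ext hrepr
    simpa using congrArg b.repr.symm this
  -- the averaged vector
  set u : V' := ∑ w : H, φ (w : V ≃ₗ[ℚ] V) v with hudef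
  have hsH : ∀ α ∈ Ψ, s α ∈ H := fun α hα => Subgroup.subset_closure ⟨α, hα, rfl⟩
  have hfixu : ∀ α ∈ Ψ, φ (s α) u = u := by
    intro α hα
    rw [hudef, map_sum]
    have step1 : ∑ w : H, φ (s α) (φ (w : V ≃ₗ[ℚ] V) v)
        = ∑ w : H, φ (((⟨s α, hsH α hα⟩ : H) * w : H) : V ≃ₗ[ℚ] V) v := by
      refine Finset.sum_congr rfl fun w _ => ?_
      rw [← hφ_mul]
      rfl
    rw [step1]
    exact Fintype.sum_equiv (Equiv.mulLeft (⟨s α, hsH α hα⟩ : H))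
      (fun w => φ (((⟨s α, hsH α hα⟩ : H) * w : H) : V ≃ₗ[ℚ] V) v)
      (fun w => φ ((w : V ≃ₗ[ℚ] V)) v)
      (fun w => rfl)
  have hpuN : (p : ℤ) • u ∈ N := by
    rw [hudef, Finset.smul_sum]
    refine Submodule.sum_mem _ fun w _ => ?_
    rw [← map_zsmul]
    exact ((hkey (w : V ≃ₗ[ℚ] V) w.2).1).2 _ hpvN
  have hpuQ : (p : ℤ) • u ∈ Submodule.span ℚ (coroot '' Ψ) := by
    have hle : N ≤ Submodule.restrictScalars ℤ (Submodule.span ℚ (coroot '' Ψ)) :=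
      Submodule.span_le.mpr fun x hx => Submodule.subset_span hx
    exact hle hpuN
  -- B vanishes between p•u and span ℚ Ψ̌
  have hfixpu : ∀ α ∈ Ψ, φ (s α) ((p : ℤ) • u) = (p : ℤ) • u := by
    intro α hα
    rw [map_zsmul, hfixu α hα]
  have hBvanish : ∀ y ∈ Submodule.span ℚ (coroot '' Ψ), B ((p : ℤ) • u) y = 0 := by
    intro y hy
    induction hy using Submodule.span_induction with
    | mem y hy =>
      obtain ⟨α, hα, rfl⟩ := hy
      have hco : φ (s α) (coroot α) = -coroot α := by
        rw [hφ_s α (hΨ hα), h2 α (hΨ hα)]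
        module
      have := hB_inv (s α) (hsH α hα) ((p : ℤ) • u) (coroot α)
      rw [hfixpu α hα, hco, hB_neg] at this
      linarith
    | zero => exact hB_zero _
    | add y z _ _ hy hz => rw [hB_add, hy, hz, add_zero]
    | smul c y _ hy => rw [hB_smul, hy, mul_zero]
  have hpu0 : (p : ℤ) • u = 0 := hB_def _ (hBvanish _ hpuQ)
  have hu0 : u = 0 := by
    have hq : ((p : ℤ) : ℚ) • u = 0 := by rw [Int.cast_smul_eq_zsmul]; exact hpu0
    have hpne : ((p : ℤ) : ℚ) ≠ 0 := by
      exact_mod_cast Nat.cast_ne_zero.mpr hp.ne_zero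
    rcases smul_eq_zero.mp hq with h | h
    · exact absurd h hpne
    · exact h
  -- n • v ∈ N where n = |H|
  have hnvN : (Nat.card H : ℤ) • v ∈ N := by
    have hsum : ∑ w : H, (v - φ (w : V ≃ₗ[ℚ] V) v) ∈ N :=
      Submodule.sum_mem _ fun w _ => (((hkey (w : V ≃ₗ[ℚ] V) w.2).1).1 v hvL).2
    have heq : ∑ w : H, (v - φ (w : V ≃ₗ[ℚ] V) v) = (Fintype.card H) • v - u := by
      rw [Finset.sum_sub_distrib, hudef, Finset.sum_const, Finset.card_univ]
    rw [heq, hu0, sub_zero] at hsum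
    rw [Nat.card_eq_fintype_card, natCast_zsmul]
    exact hsum
  -- Bézout
  have hcop : Nat.Coprime p (Nat.card H) := (Nat.Prime.coprime_iff_not_dvd hp).mpr hcardH
  have hic : IsCoprime (p : ℤ) ((Nat.card H : ℕ) : ℤ) := by
    rw [Int.isCoprime_iff_gcd_eq_one]
    exact_mod_cast hcop
  obtain ⟨a, b', hab⟩ := hic
  have hv : v = a • ((p : ℤ) • v) + b' • ((Nat.card H : ℤ) • v) := by
    rw [smul_smul, smul_smul, ← add_smul, hab, one_smul]
  rw [hv]
  exact Submodule.add_mem _ (Submodule.smul_mem _ a hpvN) (Submodule.smul_mem _ b' hnvN)
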